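/- Quantum degenerate Garnier system G(1,1,1,2), commutativity of the two Hamiltonian flows (Theorem 4.1, case 2): define K1 = q1^3p1^2 + 2q1^2q2p1p2 + q1q2^2p2^2 − t1·q1^2p1^2 − t2·q1q2p2^2 + (α3+α4−h)(q1^2p1 + q1q2p2) + (η + (2h+α1)t1)q1p1 + α2·t2·q1p2 + η·t1·q2p1 + η(1−t2)q2p2 + α3α4·q1 − η·t1·p1, and K2 = t1(q1^2q2p1^2 + q2^3p2^2 + 2q1q2^2p1p2) + t2(t2−1)q1q2p2^2 − t1(2t2·q1q2p1p2 + (t2+1)q2^2p2^2) + (α3+α4−h)t1(q1q2p1 + q2^2p2) + t1t2·q2p2^2 + α2·t1t2·q1p1 + α2·t2(1−t2)q1p2 + η·t1(1−t2)q2p1 + (t1(α1(t2−1) + α2·t2 − α3 − α4 + (2t2−1)h) + η·t2(t2−1))q2p2 + α3α4·t1·q2 − α2·t1t2·p2. Then K1·K2 = K2·K1; i.e. the quantum G(1,1,1,2) Hamiltonians H1 = K1/((h+α1+α2+α3+α4+α5)t1^2) and H2 = K2/((h+α1+α2+α3+α4+α5)t2·t1(t2−1)), whose denominators are central, commute. 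-/
import Mathlib


set_option maxHeartbeats 0 in
set_option maxRecDepth 100000 in
/-- Quantum degenerate Garnier system G(1,1,1,2): commutativity of the two Hamiltonian flows. -/
theorem quantum_garnier_G1112_commute
    {R : Type*} [Ring R]
    (h η α1 α2 α3 α4 α5 t1 t2 : R)
    (hh : ∀ r : R, h * r = r * h)
    (hη : ∀ r : R, η * r = r * η)
    (hA1 : ∀ r : R, α1 * r = r * α1)
    (hA2 : ∀ r : R, α2 * r = r * α2)
    (hA3 : ∀ r : R, α3 * r = r * α3)
    (hA4 : ∀ r : R, α4 * r = r * α4)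
    (hA5 : ∀ r : R, α5 * r = r * α5)
    (ht1 : ∀ r : R, t1 * r = r * t1)
    (ht2 : ∀ r : R, t2 * r = r * t2)
    (q1 p1 q2 p2 : R)
    (hq1p1 : q1 * p1 - p1 * q1 = h)
    (hq2p2 : q2 * p2 - p2 * q2 = h)
    (hq1q2 : q1 * q2 - q2 * q1 = 0)
    (hp1p2 : p1 * p2 - p2 * p1 = 0)
    (hq1p2 : q1 * p2 - p2 * q1 = 0)
    (hq2p1 : q2 * p1 - p1 * q2 = 0)
    (K1 K2 : R)
    (hK1 : K1 =
      q1^3 * p1^2 + 2 * q1^2 * q2 * p1 * p2 + q1 * q2^2 * p2^2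
      - t1 * q1^2 * p1^2 - t2 * q1 * q2 * p2^2
      + (α3 + α4 - h) * (q1^2 * p1 + q1 * q2 * p2)
      + (η + (2 * h + α1) * t1) * q1 * p1
      + α2 * t2 * q1 * p2
      + η * t1 * q2 * p1
      + η * (1 - t2) * q2 * p2
      + α3 * α4 * q1
      - η * t1 * p1)
    (hK2 : K2 =
      t1 * (q1^2 * q2 * p1^2 + q2^3 * p2^2 + 2 * q1 * q2^2 * p1 * p2)
      + t2 * (t2 - 1) * q1 * q2 * p2^2
      - t1 * (2 * t2 * q1 * q2 * p1 * p2 + (t2 + 1) * q2^2 * p2^2)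
      + (α3 + α4 - h) * t1 * (q1 * q2 * p1 + q2^2 * p2)
      + t1 * t2 * q2 * p2^2
      + α2 * t1 * t2 * q1 * p1
      + α2 * t2 * (1 - t2) * q1 * p2
      + η * t1 * (1 - t2) * q2 * p1
      + (t1 * (α1 * (t2 - 1) + α2 * t2 - α3 - α4 + (2 * t2 - 1) * h)
          + η * t2 * (t2 - 1)) * q2 * p2
      + α3 * α4 * t1 * q2
      - α2 * t1 * t2 * p2) :
    K1 * K2 = K2 * K1 := by
  have c_1_0 : η * h = h * η := hη h
  have c_1_0' : ∀ z : R, η * (h * z) = h * (η * z) := fun z => by rw [← mul_assoc, c_1_0, mul_assoc]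
  have c_2_0 : α1 * h = h * α1 := hA1 h
  have c_2_0' : ∀ z : R, α1 * (h * z) = h * (α1 * z) := fun z => by rw [← mul_assoc, c_2_0, mul_assoc]
  have c_3_0 : α2 * h = h * α2 := hA2 h
  have c_3_0' : ∀ z : R, α2 * (h * z) = h * (α2 * z) := fun z => by rw [← mul_assoc, c_3_0, mul_assoc]
  have c_4_0 : α3 * h = h * α3 := hA3 h
  have c_4_0' : ∀ z : R, α3 * (h * z) = h * (α3 * z) := fun z => by rw [← mul_assoc, c_4_0, mul_assoc]
  have c_5_0 : α4 * h = h * α4 := hA4 h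
  have c_5_0' : ∀ z : R, α4 * (h * z) = h * (α4 * z) := fun z => by rw [← mul_assoc, c_5_0, mul_assoc]
  have c_6_0 : α5 * h = h * α5 := hA5 h
  have c_6_0' : ∀ z : R, α5 * (h * z) = h * (α5 * z) := fun z => by rw [← mul_assoc, c_6_0, mul_assoc]
  have c_7_0 : t1 * h = h * t1 := ht1 h
  have c_7_0' : ∀ z : R, t1 * (h * z) = h * (t1 * z) := fun z => by rw [← mul_assoc, c_7_0, mul_assoc]
  have c_8_0 : t2 * h = h * t2 := ht2 h
  have c_8_0' : ∀ z : R, t2 * (h * z) = h * (t2 * z) := fun z => by rw [← mul_assoc, c_8_0, mul_assoc]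
  have c_9_0 : q1 * h = h * q1 := (hh q1).symm
  have c_9_0' : ∀ z : R, q1 * (h * z) = h * (q1 * z) := fun z => by rw [← mul_assoc, c_9_0, mul_assoc]
  have c_10_0 : q2 * h = h * q2 := (hh q2).symm
  have c_10_0' : ∀ z : R, q2 * (h * z) = h * (q2 * z) := fun z => by rw [← mul_assoc, c_10_0, mul_assoc]
  have c_11_0 : p1 * h = h * p1 := (hh p1).symm
  have c_11_0' : ∀ z : R, p1 * (h * z) = h * (p1 * z) := fun z => by rw [← mul_assoc, c_11_0, mul_assoc]
  have c_12_0 : p2 * h = h * p2 := (hh p2).symm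
  have c_12_0' : ∀ z : R, p2 * (h * z) = h * (p2 * z) := fun z => by rw [← mul_assoc, c_12_0, mul_assoc]
  have c_2_1 : α1 * η = η * α1 := hA1 η
  have c_2_1' : ∀ z : R, α1 * (η * z) = η * (α1 * z) := fun z => by rw [← mul_assoc, c_2_1, mul_assoc]
  have c_3_1 : α2 * η = η * α2 := hA2 η
  have c_3_1' : ∀ z : R, α2 * (η * z) = η * (α2 * z) := fun z => by rw [← mul_assoc, c_3_1, mul_assoc]
  have c_4_1 : α3 * η = η * α3 := hA3 η
  have c_4_1' : ∀ z : R, α3 * (η * z) = η * (α3 * z) := fun z => by rw [← mul_assoc, c_4_1, mul_assoc]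
  have c_5_1 : α4 * η = η * α4 := hA4 η
  have c_5_1' : ∀ z : R, α4 * (η * z) = η * (α4 * z) := fun z => by rw [← mul_assoc, c_5_1, mul_assoc]
  have c_6_1 : α5 * η = η * α5 := hA5 η
  have c_6_1' : ∀ z : R, α5 * (η * z) = η * (α5 * z) := fun z => by rw [← mul_assoc, c_6_1, mul_assoc]
  have c_7_1 : t1 * η = η * t1 := ht1 η
  have c_7_1' : ∀ z : R, t1 * (η * z) = η * (t1 * z) := fun z => by rw [← mul_assoc, c_7_1, mul_assoc]
  have c_8_1 : t2 * η = η * t2 := ht2 η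
  have c_8_1' : ∀ z : R, t2 * (η * z) = η * (t2 * z) := fun z => by rw [← mul_assoc, c_8_1, mul_assoc]
  have c_9_1 : q1 * η = η * q1 := (hη q1).symm
  have c_9_1' : ∀ z : R, q1 * (η * z) = η * (q1 * z) := fun z => by rw [← mul_assoc, c_9_1, mul_assoc]
  have c_10_1 : q2 * η = η * q2 := (hη q2).symm
  have c_10_1' : ∀ z : R, q2 * (η * z) = η * (q2 * z) := fun z => by rw [← mul_assoc, c_10_1, mul_assoc]
  have c_11_1 : p1 * η = η * p1 := (hη p1).symm
  have c_11_1' : ∀ z : R, p1 * (η * z) = η * (p1 * z) := fun z => by rw [← mul_assoc, c_11_1, mul_assoc]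
  have c_12_1 : p2 * η = η * p2 := (hη p2).symm
  have c_12_1' : ∀ z : R, p2 * (η * z) = η * (p2 * z) := fun z => by rw [← mul_assoc, c_12_1, mul_assoc]
  have c_3_2 : α2 * α1 = α1 * α2 := hA2 α1
  have c_3_2' : ∀ z : R, α2 * (α1 * z) = α1 * (α2 * z) := fun z => by rw [← mul_assoc, c_3_2, mul_assoc]
  have c_4_2 : α3 * α1 = α1 * α3 := hA3 α1
  have c_4_2' : ∀ z : R, α3 * (α1 * z) = α1 * (α3 * z) := fun z => by rw [← mul_assoc, c_4_2, mul_assoc]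
  have c_5_2 : α4 * α1 = α1 * α4 := hA4 α1
  have c_5_2' : ∀ z : R, α4 * (α1 * z) = α1 * (α4 * z) := fun z => by rw [← mul_assoc, c_5_2, mul_assoc]
  have c_6_2 : α5 * α1 = α1 * α5 := hA5 α1
  have c_6_2' : ∀ z : R, α5 * (α1 * z) = α1 * (α5 * z) := fun z => by rw [← mul_assoc, c_6_2, mul_assoc]
  have c_7_2 : t1 * α1 = α1 * t1 := ht1 α1
  have c_7_2' : ∀ z : R, t1 * (α1 * z) = α1 * (t1 * z) := fun z => by rw [← mul_assoc, c_7_2, mul_assoc]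
  have c_8_2 : t2 * α1 = α1 * t2 := ht2 α1
  have c_8_2' : ∀ z : R, t2 * (α1 * z) = α1 * (t2 * z) := fun z => by rw [← mul_assoc, c_8_2, mul_assoc]
  have c_9_2 : q1 * α1 = α1 * q1 := (hA1 q1).symm
  have c_9_2' : ∀ z : R, q1 * (α1 * z) = α1 * (q1 * z) := fun z => by rw [← mul_assoc, c_9_2, mul_assoc]
  have c_10_2 : q2 * α1 = α1 * q2 := (hA1 q2).symm
  have c_10_2' : ∀ z : R, q2 * (α1 * z) = α1 * (q2 * z) := fun z => by rw [← mul_assoc, c_10_2, mul_assoc]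
  have c_11_2 : p1 * α1 = α1 * p1 := (hA1 p1).symm
  have c_11_2' : ∀ z : R, p1 * (α1 * z) = α1 * (p1 * z) := fun z => by rw [← mul_assoc, c_11_2, mul_assoc]
  have c_12_2 : p2 * α1 = α1 * p2 := (hA1 p2).symm
  have c_12_2' : ∀ z : R, p2 * (α1 * z) = α1 * (p2 * z) := fun z => by rw [← mul_assoc, c_12_2, mul_assoc]
  have c_4_3 : α3 * α2 = α2 * α3 := hA3 α2
  have c_4_3' : ∀ z : R, α3 * (α2 * z) = α2 * (α3 * z) := fun z => by rw [← mul_assoc, c_4_3, mul_assoc]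
  have c_5_3 : α4 * α2 = α2 * α4 := hA4 α2
  have c_5_3' : ∀ z : R, α4 * (α2 * z) = α2 * (α4 * z) := fun z => by rw [← mul_assoc, c_5_3, mul_assoc]
  have c_6_3 : α5 * α2 = α2 * α5 := hA5 α2
  have c_6_3' : ∀ z : R, α5 * (α2 * z) = α2 * (α5 * z) := fun z => by rw [← mul_assoc, c_6_3, mul_assoc]
  have c_7_3 : t1 * α2 = α2 * t1 := ht1 α2
  have c_7_3' : ∀ z : R, t1 * (α2 * z) = α2 * (t1 * z) := fun z => by rw [← mul_assoc, c_7_3, mul_assoc]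
  have c_8_3 : t2 * α2 = α2 * t2 := ht2 α2
  have c_8_3' : ∀ z : R, t2 * (α2 * z) = α2 * (t2 * z) := fun z => by rw [← mul_assoc, c_8_3, mul_assoc]
  have c_9_3 : q1 * α2 = α2 * q1 := (hA2 q1).symm
  have c_9_3' : ∀ z : R, q1 * (α2 * z) = α2 * (q1 * z) := fun z => by rw [← mul_assoc, c_9_3, mul_assoc]
  have c_10_3 : q2 * α2 = α2 * q2 := (hA2 q2).symm
  have c_10_3' : ∀ z : R, q2 * (α2 * z) = α2 * (q2 * z) := fun z => by rw [← mul_assoc, c_10_3, mul_assoc]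
  have c_11_3 : p1 * α2 = α2 * p1 := (hA2 p1).symm
  have c_11_3' : ∀ z : R, p1 * (α2 * z) = α2 * (p1 * z) := fun z => by rw [← mul_assoc, c_11_3, mul_assoc]
  have c_12_3 : p2 * α2 = α2 * p2 := (hA2 p2).symm
  have c_12_3' : ∀ z : R, p2 * (α2 * z) = α2 * (p2 * z) := fun z => by rw [← mul_assoc, c_12_3, mul_assoc]
  have c_5_4 : α4 * α3 = α3 * α4 := hA4 α3
  have c_5_4' : ∀ z : R, α4 * (α3 * z) = α3 * (α4 * z) := fun z => by rw [← mul_assoc, c_5_4, mul_assoc]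
  have c_6_4 : α5 * α3 = α3 * α5 := hA5 α3
  have c_6_4' : ∀ z : R, α5 * (α3 * z) = α3 * (α5 * z) := fun z => by rw [← mul_assoc, c_6_4, mul_assoc]
  have c_7_4 : t1 * α3 = α3 * t1 := ht1 α3
  have c_7_4' : ∀ z : R, t1 * (α3 * z) = α3 * (t1 * z) := fun z => by rw [← mul_assoc, c_7_4, mul_assoc]
  have c_8_4 : t2 * α3 = α3 * t2 := ht2 α3
  have c_8_4' : ∀ z : R, t2 * (α3 * z) = α3 * (t2 * z) := fun z => by rw [← mul_assoc, c_8_4, mul_assoc]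
  have c_9_4 : q1 * α3 = α3 * q1 := (hA3 q1).symm
  have c_9_4' : ∀ z : R, q1 * (α3 * z) = α3 * (q1 * z) := fun z => by rw [← mul_assoc, c_9_4, mul_assoc]
  have c_10_4 : q2 * α3 = α3 * q2 := (hA3 q2).symm
  have c_10_4' : ∀ z : R, q2 * (α3 * z) = α3 * (q2 * z) := fun z => by rw [← mul_assoc, c_10_4, mul_assoc]
  have c_11_4 : p1 * α3 = α3 * p1 := (hA3 p1).symm
  have c_11_4' : ∀ z : R, p1 * (α3 * z) = α3 * (p1 * z) := fun z => by rw [← mul_assoc, c_11_4, mul_assoc]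
  have c_12_4 : p2 * α3 = α3 * p2 := (hA3 p2).symm
  have c_12_4' : ∀ z : R, p2 * (α3 * z) = α3 * (p2 * z) := fun z => by rw [← mul_assoc, c_12_4, mul_assoc]
  have c_6_5 : α5 * α4 = α4 * α5 := hA5 α4
  have c_6_5' : ∀ z : R, α5 * (α4 * z) = α4 * (α5 * z) := fun z => by rw [← mul_assoc, c_6_5, mul_assoc]
  have c_7_5 : t1 * α4 = α4 * t1 := ht1 α4
  have c_7_5' : ∀ z : R, t1 * (α4 * z) = α4 * (t1 * z) := fun z => by rw [← mul_assoc, c_7_5, mul_assoc]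
  have c_8_5 : t2 * α4 = α4 * t2 := ht2 α4
  have c_8_5' : ∀ z : R, t2 * (α4 * z) = α4 * (t2 * z) := fun z => by rw [← mul_assoc, c_8_5, mul_assoc]
  have c_9_5 : q1 * α4 = α4 * q1 := (hA4 q1).symm
  have c_9_5' : ∀ z : R, q1 * (α4 * z) = α4 * (q1 * z) := fun z => by rw [← mul_assoc, c_9_5, mul_assoc]
  have c_10_5 : q2 * α4 = α4 * q2 := (hA4 q2).symm
  have c_10_5' : ∀ z : R, q2 * (α4 * z) = α4 * (q2 * z) := fun z => by rw [← mul_assoc, c_10_5, mul_assoc]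
  have c_11_5 : p1 * α4 = α4 * p1 := (hA4 p1).symm
  have c_11_5' : ∀ z : R, p1 * (α4 * z) = α4 * (p1 * z) := fun z => by rw [← mul_assoc, c_11_5, mul_assoc]
  have c_12_5 : p2 * α4 = α4 * p2 := (hA4 p2).symm
  have c_12_5' : ∀ z : R, p2 * (α4 * z) = α4 * (p2 * z) := fun z => by rw [← mul_assoc, c_12_5, mul_assoc]
  have c_7_6 : t1 * α5 = α5 * t1 := ht1 α5
  have c_7_6' : ∀ z : R, t1 * (α5 * z) = α5 * (t1 * z) := fun z => by rw [← mul_assoc, c_7_6, mul_assoc]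
  have c_8_6 : t2 * α5 = α5 * t2 := ht2 α5
  have c_8_6' : ∀ z : R, t2 * (α5 * z) = α5 * (t2 * z) := fun z => by rw [← mul_assoc, c_8_6, mul_assoc]
  have c_9_6 : q1 * α5 = α5 * q1 := (hA5 q1).symm
  have c_9_6' : ∀ z : R, q1 * (α5 * z) = α5 * (q1 * z) := fun z => by rw [← mul_assoc, c_9_6, mul_assoc]
  have c_10_6 : q2 * α5 = α5 * q2 := (hA5 q2).symm
  have c_10_6' : ∀ z : R, q2 * (α5 * z) = α5 * (q2 * z) := fun z => by rw [← mul_assoc, c_10_6, mul_assoc]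
  have c_11_6 : p1 * α5 = α5 * p1 := (hA5 p1).symm
  have c_11_6' : ∀ z : R, p1 * (α5 * z) = α5 * (p1 * z) := fun z => by rw [← mul_assoc, c_11_6, mul_assoc]
  have c_12_6 : p2 * α5 = α5 * p2 := (hA5 p2).symm
  have c_12_6' : ∀ z : R, p2 * (α5 * z) = α5 * (p2 * z) := fun z => by rw [← mul_assoc, c_12_6, mul_assoc]
  have c_8_7 : t2 * t1 = t1 * t2 := ht2 t1
  have c_8_7' : ∀ z : R, t2 * (t1 * z) = t1 * (t2 * z) := fun z => by rw [← mul_assoc, c_8_7, mul_assoc]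
  have c_9_7 : q1 * t1 = t1 * q1 := (ht1 q1).symm
  have c_9_7' : ∀ z : R, q1 * (t1 * z) = t1 * (q1 * z) := fun z => by rw [← mul_assoc, c_9_7, mul_assoc]
  have c_10_7 : q2 * t1 = t1 * q2 := (ht1 q2).symm
  have c_10_7' : ∀ z : R, q2 * (t1 * z) = t1 * (q2 * z) := fun z => by rw [← mul_assoc, c_10_7, mul_assoc]
  have c_11_7 : p1 * t1 = t1 * p1 := (ht1 p1).symm
  have c_11_7' : ∀ z : R, p1 * (t1 * z) = t1 * (p1 * z) := fun z => by rw [← mul_assoc, c_11_7, mul_assoc]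
  have c_12_7 : p2 * t1 = t1 * p2 := (ht1 p2).symm
  have c_12_7' : ∀ z : R, p2 * (t1 * z) = t1 * (p2 * z) := fun z => by rw [← mul_assoc, c_12_7, mul_assoc]
  have c_9_8 : q1 * t2 = t2 * q1 := (ht2 q1).symm
  have c_9_8' : ∀ z : R, q1 * (t2 * z) = t2 * (q1 * z) := fun z => by rw [← mul_assoc, c_9_8, mul_assoc]
  have c_10_8 : q2 * t2 = t2 * q2 := (ht2 q2).symm
  have c_10_8' : ∀ z : R, q2 * (t2 * z) = t2 * (q2 * z) := fun z => by rw [← mul_assoc, c_10_8, mul_assoc]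
  have c_11_8 : p1 * t2 = t2 * p1 := (ht2 p1).symm
  have c_11_8' : ∀ z : R, p1 * (t2 * z) = t2 * (p1 * z) := fun z => by rw [← mul_assoc, c_11_8, mul_assoc]
  have c_12_8 : p2 * t2 = t2 * p2 := (ht2 p2).symm
  have c_12_8' : ∀ z : R, p2 * (t2 * z) = t2 * (p2 * z) := fun z => by rw [← mul_assoc, c_12_8, mul_assoc]
  have c_10_9 : q2 * q1 = q1 * q2 := (sub_eq_zero.mp hq1q2).symm
  have c_10_9' : ∀ z : R, q2 * (q1 * z) = q1 * (q2 * z) := fun z => by rw [← mul_assoc, c_10_9, mul_assoc]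
  have c_11_9 : p1 * q1 = q1 * p1 - h := by rw [← hq1p1]; abel
  have c_11_9' : ∀ z : R, p1 * (q1 * z) = q1 * (p1 * z) - h * z := fun z => by rw [← mul_assoc, c_11_9, sub_mul, mul_assoc]
  have c_12_9 : p2 * q1 = q1 * p2 := (sub_eq_zero.mp hq1p2).symm
  have c_12_9' : ∀ z : R, p2 * (q1 * z) = q1 * (p2 * z) := fun z => by rw [← mul_assoc, c_12_9, mul_assoc]
  have c_11_10 : p1 * q2 = q2 * p1 := (sub_eq_zero.mp hq2p1).symm
  have c_11_10' : ∀ z : R, p1 * (q2 * z) = q2 * (p1 * z) := fun z => by rw [← mul_assoc, c_11_10, mul_assoc]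
  have c_12_10 : p2 * q2 = q2 * p2 - h := by rw [← hq2p2]; abel
  have c_12_10' : ∀ z : R, p2 * (q2 * z) = q2 * (p2 * z) - h * z := fun z => by rw [← mul_assoc, c_12_10, sub_mul, mul_assoc]
  have c_12_11 : p2 * p1 = p1 * p2 := (sub_eq_zero.mp hp1p2).symm
  have c_12_11' : ∀ z : R, p2 * (p1 * z) = p1 * (p2 * z) := fun z => by rw [← mul_assoc, c_12_11, mul_assoc]
  subst hK1 hK2
  simp only [pow_succ, pow_zero, one_mul, mul_one, two_mul, mul_add, add_mul, mul_sub, sub_mul, mul_assoc, c_1_0, c_1_0', c_2_0, c_2_0', c_3_0, c_3_0', c_4_0, c_4_0', c_5_0, c_5_0', c_6_0, c_6_0', c_7_0, c_7_0', c_8_0, c_8_0', c_9_0, c_9_0', c_10_0, c_10_0', c_11_0, c_11_0', c_12_0, c_12_0', c_2_1, c_2_1', c_3_1, c_3_1', c_4_1, c_4_1', c_5_1, c_5_1', c_6_1, c_6_1', c_7_1, c_7_1', c_8_1, c_8_1', c_9_1, c_9_1', c_10_1, c_10_1', c_11_1, c_11_1', c_12_1, c_12_1', c_3_2, c_3_2',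 c_4_2, c_4_2', c_5_2, c_5_2', c_6_2, c_6_2', c_7_2, c_7_2', c_8_2, c_8_2', c_9_2, c_9_2', c_10_2, c_10_2', c_11_2, c_11_2', c_12_2, c_12_2', c_4_3, c_4_3', c_5_3, c_5_3', c_6_3, c_6_3', c_7_3, c_7_3', c_8_3, c_8_3', c_9_3, c_9_3', c_10_3, c_10_3', c_11_3, c_11_3', c_12_3, c_12_3', c_5_4, c_5_4', c_6_4, c_6_4', c_7_4, c_7_4', c_8_4, c_8_4', c_9_4, c_9_4', c_10_4, c_10_4', c_11_4, c_11_4', c_12_4, c_12_4', c_6_5, c_6_5', c_7_5, c_7_5', c_8_5, c_8_5', c_9_5, c_9_5', c_10_5, c_10_5', c_11_5, c_11_5', c_12_5, c_12_5', c_7_6, c_7_6', c_8_6, c_8_6', c_9_6, c_9_6', c_10_6, c_10_6', c_11_6, c_11_6', c_12_6, c_12_6', c_8_7, c_8_7', c_9_7, c_9_7', c_10_7, c_10_7', c_11_7, c_11_7', c_12_7, c_12_7', c_9_8, c_9_8', c_10_8, c_10_8', c_11_8, c_11_8', c_12_8, c_12_8', c_10_9, c_10_9', c_11_9, c_11_9',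 c_12_9, c_12_9', c_11_10, c_11_10', c_12_10, c_12_10', c_12_11, c_12_11']
  abel
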